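/- Let L be a PG-lattice, M a faithful multiplication PG-lattice L-module with I_M compact, δ_L an expansion function on L, and N a proper element of M. Then the following are equivalent: (1) N is a δ_L-primary element of M; (2) (N:I_M) is a δ_L-primary element of L; (3) N = qI_M for some δ_L-primary element q ∈ L. -/

import Mathlib

open CompleteLattice

universe u v

/-- A multiplicative lattice: a complete lattice with a commutative, associative
multiplication distributing over arbitrary joins, whose top element is the
multiplicative identity. -/
class MultiplicativeLattice (L : Type u) extends CompleteLattice L, CommMonoid L where
  one_eq_top : (1 : L) = ⊤
  sSup_mul : ∀ (S : Set L) (b : L), sSup S * b = ⨆ a ∈ S, a * b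

/-- A lattice module over a multiplicative lattice. -/
class LatticeModule (L : Type u) [MultiplicativeLattice L] (M : Type v)
    extends CompleteLattice M, SMul L M where
  sSup_smul : ∀ (S : Set L) (A : M), (SupSet.sSup S : L) • A = ⨆ a ∈ S, a • A
  smul_sSup : ∀ (a : L) (S : Set M), a • sSup S = ⨆ B ∈ S, a • B
  mul_smul : ∀ (a b : L) (A : M), (a * b) • A = a • b • A
  one_smul : ∀ A : M, (1 : L) • A = A
  bot_smul : ∀ A : M, (⊥ : L) • A = (⊥ : M)

section LatticeDefs

variable {L : Type u} [MultiplicativeLattice L]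

/-- The residual `(a : b)` in `L`. -/
def lColon (a b : L) : L := sSup {x : L | x * b ≤ a}

/-- The radical `√a` of an element of `L`. -/
def radL (a : L) : L :=
  sSup {x : L | IsCompactElement x ∧ ∃ n : ℕ, 1 ≤ n ∧ x ^ n ≤ a}

/-- A principal element of a multiplicative lattice (meet principal and join principal). -/
def IsPrincipalElemL (e : L) : Prop :=
  (∀ a b : L, a ⊓ b * e = (lColon a e ⊓ b) * e) ∧
  (∀ a b : L, lColon (a * e ⊔ b) e = lColon b e ⊔ a)

/-- An expansion function on `L`. -/
def IsExpansionL (δ : L → L) : Prop :=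
  (∀ a : L, a ≤ δ a) ∧ ∀ a b : L, a ≤ b → δ a ≤ δ b

/-- A 2-absorbing element of `L`. -/
def Is2AbsorbingL (q : L) : Prop :=
  q < ⊤ ∧ ∀ a b c : L, a * b * c ≤ q → a * b ≤ q ∨ b * c ≤ q ∨ c * a ≤ q

/-- A 2-absorbing primary element of `L`. -/
def Is2AbsorbingPrimaryL (q : L) : Prop :=
  q < ⊤ ∧ ∀ a b c : L, a * b * c ≤ q → a * b ≤ q ∨ b * c ≤ radL q ∨ c * a ≤ radL q

/-- A `δL`-primary element of `L`. -/
def IsDeltaLPrimaryL (δL : L → L) (p : L) : Prop :=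
  p < ⊤ ∧ ∀ a b : L, a * b ≤ p → a ≤ p ∨ b ≤ δL p

end LatticeDefs

/-- `L` is a PG-lattice: every element is a join of principal elements. -/
def IsPGLattice (L : Type u) [MultiplicativeLattice L] : Prop :=
  ∀ a : L, a = sSup {e : L | IsPrincipalElemL e ∧ e ≤ a}

section ModuleDefs

variable (L : Type u) {M : Type v} [MultiplicativeLattice L] [LatticeModule L M]

/-- The element `(A : B)` of `L`, for `A B : M`. -/
def mColon (A B : M) : L := sSup {x : L | x • B ≤ A}

/-- The element `(N : a)` of `M`, for `N : M`, `a : L`. -/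
def resColon (N : M) (a : L) : M := sSup {X : M | a • X ≤ N}

/-- An expansion function on the `L`-module `M`. -/
def IsExpansionM (δ : M → M) : Prop :=
  (∀ A : M, A ≤ δ A) ∧ ∀ A B : M, A ≤ B → δ A ≤ δ B

/-- A `δ`-primary element of the `L`-module `M`. -/
def IsDeltaPrimaryM (δ : M → M) (P : M) : Prop :=
  P < ⊤ ∧ ∀ (a : L) (A : M), a • A ≤ P → A ≤ P ∨ a • (⊤ : M) ≤ δ P

/-- A prime element of the `L`-module `M`. -/
def IsPrimeM (P : M) : Prop :=
  P < ⊤ ∧ ∀ (a : L) (A : M), a • A ≤ P → A ≤ P ∨ a • (⊤ : M) ≤ P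

/-- A primary element of the `L`-module `M`. -/
def IsPrimaryM (P : M) : Prop :=
  P < ⊤ ∧ ∀ (a : L) (A : M), a • A ≤ P → A ≤ P ∨ ∃ n : ℕ, 1 ≤ n ∧ a ^ n • (⊤ : M) ≤ P

/-- A principal element of the `L`-module `M` (meet principal and join principal). -/
def IsPrincipalElemM (N : M) : Prop :=
  (∀ (b : L) (B : M), (b ⊓ mColon L B N) • N = b • N ⊓ B) ∧
  (∀ (b : L) (B : M), b ⊔ mColon L B N = mColon L (b • N ⊔ B) N)

/-- A maximal element of the `L`-module `M`. -/
def IsMaximalM (H : M) : Prop :=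
  H < ⊤ ∧ ∀ B : M, H ≤ B → B = H ∨ B = ⊤

/-- A meet prime element of the `L`-module `M`. -/
def IsMeetPrimeM (N : M) : Prop :=
  N < ⊤ ∧ ∀ A B : M, A ⊓ B ≤ N → A ≤ N ∨ B ≤ N

/-- The expansion function `δ₁` on a multiplication `L`-module `M`:
`δ₁(A) = (√(A : I_M)) I_M`. -/
def delta1 (A : M) : M := radL (mColon L A (⊤ : M)) • (⊤ : M)

/-- The expansion function `δ₂`: meet of all maximal elements above a proper element. -/
noncomputable def delta2 (A : M) : M := by
  classical exact if A = ⊤ then ⊤ else sInf {H : M | A ≤ H ∧ IsMaximalM L H}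

/-- A 2-absorbing primary element of the `L`-module `M`. -/
def Is2AbsorbingPrimaryM (Q : M) : Prop :=
  Q < ⊤ ∧ ∀ (a b : L) (N : M), (a * b) • N ≤ Q →
    a * b ≤ mColon L Q (⊤ : M) ∨
    b • N ≤ radL (mColon L Q (⊤ : M)) • (⊤ : M) ∨
    a • N ≤ radL (mColon L Q (⊤ : M)) • (⊤ : M)

/-- A `δL`-primary element of the `L`-module `M`, for an expansion function `δL` on `L`. -/
def IsDeltaLPrimaryM (δL : L → L) (P : M) : Prop :=
  P < ⊤ ∧ ∀ (a : L) (A : M), a • A ≤ P → A ≤ P ∨ a ≤ δL (mColon L P (⊤ : M))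

end ModuleDefs

/-- `M` is a PG-lattice `L`-module: every element is a join of principal elements. -/
def IsPGModule (L : Type u) (M : Type v) [MultiplicativeLattice L] [LatticeModule L M] : Prop :=
  ∀ N : M, N = sSup {E : M | IsPrincipalElemM L E ∧ E ≤ N}

/-- `M` is a multiplication `L`-module. -/
def IsMultiplicationModule (L : Type u) (M : Type v)
    [MultiplicativeLattice L] [LatticeModule L M] : Prop :=
  ∀ N : M, ∃ a : L, N = a • (⊤ : M)

/-- `M` is a faithful `L`-module: `(O_M : I_M) = 0`. -/
def IsFaithfulModule (L : Type u) (M : Type v)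
    [MultiplicativeLattice L] [LatticeModule L M] : Prop :=
  mColon L (⊥ : M) (⊤ : M) = (⊥ : L)

section Helpers

variable {L : Type u} {M : Type v} [MultiplicativeLattice L] [LatticeModule L M]

lemma lat_le_one (a : L) : a ≤ 1 := by
  rw [MultiplicativeLattice.one_eq_top]; exact le_top

lemma lat_sup_eq_one {m a : L} (h : (1 : L) ≤ m ⊔ a) : m ⊔ a = 1 :=
  le_antisymm (lat_le_one _) h

lemma lat_sup_mul (a b c : L) : (a ⊔ b) * c = a * c ⊔ b * c := by
  have h := MultiplicativeLattice.sSup_mul ({a, b} : Set L) c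
  rw [sSup_pair] at h
  simpa [iSup_or, iSup_sup_eq] using h

lemma lat_mul_sup (a b c : L) : a * (b ⊔ c) = a * b ⊔ a * c := by
  rw [mul_comm, lat_sup_mul, mul_comm b a, mul_comm c a]

lemma lat_mul_le_mul_right {a b : L} (h : a ≤ b) (c : L) : a * c ≤ b * c := by
  have := lat_sup_mul a b c
  rw [sup_eq_right.mpr h] at this
  exact this ▸ le_sup_left

lemma lat_mul_le_left (a b : L) : a * b ≤ b := by
  simpa using lat_mul_le_mul_right (lat_le_one a) b

lemma lat_mul_le_right (a b : L) : a * b ≤ a := by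
  rw [mul_comm]; exact lat_mul_le_left b a

lemma mod_sup_smul (a b : L) (A : M) : (a ⊔ b) • A = a • A ⊔ b • A := by
  have h := LatticeModule.sSup_smul ({a, b} : Set L) A
  rw [sSup_pair] at h
  simpa [iSup_or, iSup_sup_eq] using h

lemma mod_smul_sup (a : L) (B C : M) : a • (B ⊔ C) = a • B ⊔ a • C := by
  have h := LatticeModule.smul_sSup a ({B, C} : Set M)
  rw [sSup_pair] at h
  simpa [iSup_or, iSup_sup_eq] using h

lemma mod_smul_bot (a : L) : a • (⊥ : M) = ⊥ := by
  have h := LatticeModule.smul_sSup a (∅ : Set M)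
  simpa using h

lemma mod_smul_le_smul_left {a b : L} (h : a ≤ b) (A : M) : a • A ≤ b • A := by
  have := mod_sup_smul a b A
  rw [sup_eq_right.mpr h] at this
  exact this ▸ le_sup_left

lemma mod_smul_le_smul_right (a : L) {A B : M} (h : A ≤ B) : a • A ≤ a • B := by
  have := mod_smul_sup a A B
  rw [sup_eq_right.mpr h] at this
  exact this ▸ le_sup_left

lemma mod_smul_le_self (a : L) (A : M) : a • A ≤ A := by
  have := mod_smul_le_smul_left (lat_le_one a) A
  rwa [LatticeModule.one_smul] at this

lemma mColon_smul_self_le (B A : M) : mColon L B A • A ≤ B := by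
  rw [mColon, LatticeModule.sSup_smul]
  exact iSup₂_le fun x hx => hx

lemma le_mColon {x : L} {A B : M} (h : x • A ≤ B) : x ≤ mColon L B A := le_sSup h

lemma mod_smul_comm (a b : L) (A : M) : a • b • A = b • a • A := by
  rw [← LatticeModule.mul_smul, mul_comm, LatticeModule.mul_smul]

/-- A Nakayama-type lemma for lattice modules. -/
lemma nak_lemma (m : L) (T : Finset M) (hTp : ∀ X ∈ T, IsPrincipalElemM L X) :
    ∀ (Z : M) (w : L), m ⊔ w = 1 → (∀ X ∈ T, w • X ≤ m • (T.sup id) ⊔ Z) →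
    ∃ u : L, m ⊔ u = 1 ∧ u • (T.sup id) ≤ Z := by
  classical
  induction T using Finset.induction_on with
  | empty =>
    intro Z w hw _
    refine ⟨1, lat_sup_eq_one le_sup_right, ?_⟩
    rw [Finset.sup_empty, mod_smul_bot]
    exact bot_le
  | @insert e T' he ih =>
    intro Z w hw hrow
    have hep : IsPrincipalElemM L e := hTp e (Finset.mem_insert_self e T')
    have hT'p : ∀ X ∈ T', IsPrincipalElemM L X := fun X hX => hTp X (Finset.mem_insert_of_mem hX)
    set Y' : M := T'.sup id with hY'
    have hsup : (insert e T').sup id = e ⊔ Y' := by simp [hY']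
    -- row for e
    have hrowe : w • e ≤ m • e ⊔ (m • Y' ⊔ Z) := by
      have := hrow e (Finset.mem_insert_self e T')
      rw [hsup, mod_smul_sup] at this
      exact this.trans (by rw [sup_assoc])
    set v : L := mColon L (m • Y' ⊔ Z) e with hv
    have hjp := hep.2 m (m • Y' ⊔ Z)
    have hwle : w ≤ m ⊔ v := by
      rw [hv, hjp]
      exact le_mColon hrowe
    have hmv : m ⊔ v = 1 := by
      apply lat_sup_eq_one
      calc (1 : L) = m ⊔ w := hw.symm
        _ ≤ m ⊔ (m ⊔ v) := sup_le_sup_left hwle m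
        _ = m ⊔ v := by rw [← sup_assoc, sup_idem]
    have hve : v • e ≤ m • Y' ⊔ Z := mColon_smul_self_le _ _
    -- rows for T'
    have hrow' : ∀ X ∈ T', (v * w) • X ≤ m • Y' ⊔ Z := by
      intro X hX
      have h1 : w • X ≤ m • e ⊔ (m • Y' ⊔ Z) := by
        have := hrow X (Finset.mem_insert_of_mem hX)
        rw [hsup, mod_smul_sup] at this
        exact this.trans (by rw [sup_assoc])
      calc (v * w) • X = v • w • X := LatticeModule.mul_smul v w X
        _ ≤ v • (m • e ⊔ (m • Y' ⊔ Z)) := mod_smul_le_smul_right v h1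
        _ = v • m • e ⊔ v • (m • Y' ⊔ Z) := mod_smul_sup v _ _
        _ ≤ m • Y' ⊔ Z := by
            apply sup_le
            · calc v • m • e = m • v • e := mod_smul_comm v m e
                _ ≤ m • (m • Y' ⊔ Z) := mod_smul_le_smul_right m hve
                _ = m • m • Y' ⊔ m • Z := mod_smul_sup m _ _
                _ ≤ m • Y' ⊔ Z := sup_le_sup (mod_smul_le_self m _) (mod_smul_le_self m _)
            · exact mod_smul_le_self v _
    have hmvw : m ⊔ v * w = 1 := by
      apply lat_sup_eq_one
      calc (1 : L) = (m ⊔ v) * (m ⊔ w) := by rw [hmv, hw, one_mul]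
        _ = m * (m ⊔ w) ⊔ v * (m ⊔ w) := lat_sup_mul _ _ _
        _ = (m * m ⊔ m * w) ⊔ (v * m ⊔ v * w) := by rw [lat_mul_sup, lat_mul_sup]
        _ ≤ m ⊔ v * w := by
            apply sup_le (sup_le ((lat_mul_le_right m m).trans le_sup_left)
              ((lat_mul_le_right m w).trans le_sup_left))
            exact sup_le ((lat_mul_le_left v m).trans le_sup_left) le_sup_right
    obtain ⟨u', hu'1, hu'2⟩ := ih hT'p Z (v * w) hmvw hrow'
    refine ⟨u' * (v * w), lat_sup_eq_one ?_, ?_⟩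
    · calc (1 : L) = (m ⊔ u') * (m ⊔ v * w) := by rw [hu'1, hmvw, one_mul]
        _ = (m * m ⊔ m * (v * w)) ⊔ (u' * m ⊔ u' * (v * w)) := by
            rw [lat_sup_mul, lat_mul_sup, lat_mul_sup]
        _ ≤ m ⊔ u' * (v * w) := by
            apply sup_le (sup_le ((lat_mul_le_right m m).trans le_sup_left)
              ((lat_mul_le_right m _).trans le_sup_left))
            exact sup_le ((lat_mul_le_left u' m).trans le_sup_left) le_sup_right
    · rw [hsup, mod_smul_sup]
      apply sup_le
      · calc (u' * (v * w)) • e = ((u' * w) * v) • e := by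
              rw [mul_comm v w, mul_assoc]
          _ = (u' * w) • v • e := LatticeModule.mul_smul _ _ _
          _ ≤ (u' * w) • (m • Y' ⊔ Z) := mod_smul_le_smul_right _ hve
          _ = (u' * w) • m • Y' ⊔ (u' * w) • Z := mod_smul_sup _ _ _
          _ ≤ Z := by
              apply sup_le _ (mod_smul_le_self _ _)
              calc (u' * w) • m • Y' = ((w * m) * u') • Y' := by
                    rw [← LatticeModule.mul_smul]
                    congr 1
                    rw [mul_assoc]
                    exact mul_comm u' (w * m)
                _ = (w * m) • u' • Y' := LatticeModule.mul_smul _ _ _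
                _ ≤ (w * m) • Z := mod_smul_le_smul_right _ hu'2
                _ ≤ Z := mod_smul_le_self _ _
      · calc (u' * (v * w)) • Y' = (v * w) • u' • Y' := by
              rw [mul_comm u' (v * w), LatticeModule.mul_smul]
          _ ≤ (v * w) • Z := mod_smul_le_smul_right _ hu'2
          _ ≤ Z := mod_smul_le_self _ _

lemma finset_sup_smul (T : Finset M) (f : M → L) (A : M) :
    (T.sup f) • A = T.sup (fun X => f X • A) := by
  classical
  induction T using Finset.induction_on with
  | empty => simp [LatticeModule.bot_smul]
  | @insert e T' he ih => simp [mod_sup_smul, ih]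

lemma lat_bot_mul (b : L) : (⊥ : L) * b = ⊥ := by
  have h := MultiplicativeLattice.sSup_mul (∅ : Set L) b
  simpa using h

lemma finset_mul_sup (T : Finset M) (f : M → L) (d : L) :
    d * (T.sup f) = T.sup (fun X => d * f X) := by
  classical
  induction T using Finset.induction_on with
  | empty =>
    rw [Finset.sup_empty, Finset.sup_empty, mul_comm]
    exact lat_bot_mul d
  | @insert e T' he ih => simp [lat_mul_sup, ih]

/-- Key cancellation lemma: in a faithful multiplication PG-module with compact top,
`d • ⊤ ≤ a • ⊤` implies `d ≤ a`. -/
lemma key_cancel (hPGM : IsPGModule L M) (hmult : IsMultiplicationModule L M)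
    (hfaith : IsFaithfulModule L M) (htop : IsCompactElement (⊤ : M)) :
    ∀ d a : L, d • (⊤ : M) ≤ a • (⊤ : M) → d ≤ a := by
  classical
  -- decompose ⊤ into finitely many principal elements
  have htople : (⊤ : M) ≤ sSup {E : M | IsPrincipalElemM L E ∧ E ≤ ⊤} := (hPGM ⊤).le
  obtain ⟨T, hTsub, hTle⟩ := (isCompactElement_iff_exists_le_sSup_of_le_sSup M _).mp htop _ htople
  have hTsup : T.sup id = ⊤ := le_antisymm le_top hTle
  have hTp : ∀ X ∈ T, IsPrincipalElemM L X := fun X hX => (hTsub hX).1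
  -- each principal X satisfies X = (X : ⊤) • ⊤
  have hXeq : ∀ X : M, X = mColon L X (⊤ : M) • ⊤ := by
    intro X
    obtain ⟨b, hb⟩ := hmult X
    have hble : b ≤ mColon L X ⊤ := le_mColon hb.ge
    exact le_antisymm (hb.le.trans (mod_smul_le_smul_left hble ⊤)) (mColon_smul_self_le X ⊤)
  set c : L := T.sup (fun X => mColon L X (⊤ : M)) with hc
  have hcI : c • (⊤ : M) = ⊤ := by
    apply le_antisymm le_top
    calc (⊤ : M) = T.sup id := hTsup.symm
      _ ≤ T.sup (fun X => mColon L X (⊤ : M) • ⊤) :=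
          Finset.sup_le fun X hX => (hXeq X).le.trans (Finset.le_sup (f := fun X => mColon L X (⊤ : M) • ⊤) hX)
      _ = c • ⊤ := (finset_sup_smul T _ ⊤).symm
  -- Nakayama gives c = 1
  have hc1 : c = 1 := by
    have hrows : ∀ X ∈ T, (1 : L) • X ≤ c • (T.sup id) ⊔ (⊥ : M) := by
      intro X hX
      rw [LatticeModule.one_smul, hTsup, hcI]
      exact le_top.trans le_sup_left
    obtain ⟨u, hu1, hu2⟩ := nak_lemma c T hTp ⊥ 1 (lat_sup_eq_one le_sup_right) hrows
    have hub : u ≤ (⊥ : L) := by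
      rw [← hfaith]
      exact le_mColon (by rwa [hTsup] at hu2)
    rw [← hu1, le_bot_iff.mp hub, sup_bot_eq]
  intro d a hda
  -- for each X in T, d * (X : ⊤) ≤ a
  have hkey : ∀ X ∈ T, d * mColon L X (⊤ : M) ≤ a := by
    intro X hX
    set cX : L := mColon L X (⊤ : M) with hcX
    have hdX : d • X ≤ a • X := by
      calc d • X = cX • d • (⊤ : M) := by rw [hXeq X, ← hcX, mod_smul_comm]
        _ ≤ cX • a • (⊤ : M) := mod_smul_le_smul_right cX hda
        _ = a • cX • (⊤ : M) := mod_smul_comm cX a ⊤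
        _ = a • X := by rw [hcX, ← hXeq X]
    have hjp := (hTp X hX).2 a (⊥ : M)
    have hdle : d ≤ a ⊔ mColon L ⊥ X := by
      rw [hjp]
      exact le_mColon (by rwa [sup_bot_eq])
    have hz : mColon L (⊥ : M) X * cX ≤ ⊥ := by
      rw [← hfaith]
      apply le_mColon
      calc (mColon L (⊥ : M) X * cX) • (⊤ : M) = mColon L (⊥ : M) X • cX • ⊤ :=
            LatticeModule.mul_smul _ _ _
        _ = mColon L (⊥ : M) X • X := by rw [hcX, ← hXeq X]
        _ ≤ ⊥ := mColon_smul_self_le ⊥ X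
    calc d * cX ≤ (a ⊔ mColon L ⊥ X) * cX := lat_mul_le_mul_right hdle cX
      _ = a * cX ⊔ mColon L ⊥ X * cX := lat_sup_mul _ _ _
      _ ≤ a ⊔ ⊥ := sup_le ((lat_mul_le_right a cX).trans le_sup_left) (hz.trans bot_le)
      _ = a := sup_bot_eq a
  calc d = d * c := by rw [hc1, mul_one]
    _ = T.sup (fun X => d * mColon L X (⊤ : M)) := finset_mul_sup T _ d
    _ ≤ a := Finset.sup_le hkey

end Helpers

theorem stmt19 {L : Type u} {M : Type v} [MultiplicativeLattice L] [LatticeModule L M]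
    [IsCompactlyGenerated L]
    (h1cpt : IsCompactElement (1 : L))
    (hmulcpt : ∀ a b : L, IsCompactElement a → IsCompactElement b → IsCompactElement (a * b))
    (hPGL : IsPGLattice L) (hPGM : IsPGModule L M)
    (hmult : IsMultiplicationModule L M) (hfaith : IsFaithfulModule L M)
    (htop : IsCompactElement (⊤ : M))
    (δL : L → L) (hδL : IsExpansionL δL)
    (N : M) (hN : N < ⊤) :
    List.TFAE [IsDeltaLPrimaryM L δL N,
      IsDeltaLPrimaryL δL (mColon L N (⊤ : M)),
      ∃ q : L, IsDeltaLPrimaryL δL q ∧ N = q • (⊤ : M)] := by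
  have h1top : (1 : L) = ⊤ := MultiplicativeLattice.one_eq_top
  set c : L := mColon L N (⊤ : M) with hc
  have hNeq : N = c • ⊤ := by
    obtain ⟨b, hb⟩ := hmult N
    have hble : b ≤ c := le_mColon hb.ge
    exact le_antisymm (hb.le.trans (mod_smul_le_smul_left hble ⊤)) (mColon_smul_self_le N ⊤)
  have hclt : c < ⊤ := by
    rw [lt_top_iff_ne_top]
    intro hct
    apply hN.ne
    rw [hNeq, hct, ← h1top, LatticeModule.one_smul]
  tfae_have 1 → 2 := by
    intro h
    refine ⟨hclt, fun a b hab => ?_⟩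
    have hba : b • (a • (⊤ : M)) ≤ N := by
      calc b • (a • (⊤ : M)) = (a * b) • ⊤ := by
            rw [← LatticeModule.mul_smul, mul_comm]
        _ ≤ c • ⊤ := mod_smul_le_smul_left hab ⊤
        _ = N := hNeq.symm
    rcases h.2 b (a • ⊤) hba with hA | hb
    · exact Or.inl (le_mColon hA)
    · exact Or.inr hb
  tfae_have 2 → 3 := fun h => ⟨c, h, hNeq⟩
  tfae_have 3 → 1 := by
    rintro ⟨q, hq, hNq⟩
    refine ⟨hN, fun a A haA => ?_⟩
    have hAeq : A = mColon L A (⊤ : M) • ⊤ := by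
      obtain ⟨b, hb⟩ := hmult A
      have hble : b ≤ mColon L A ⊤ := le_mColon hb.ge
      exact le_antisymm (hb.le.trans (mod_smul_le_smul_left hble ⊤)) (mColon_smul_self_le A ⊤)
    set bA : L := mColon L A (⊤ : M) with hbA
    have habq : (a * bA) • (⊤ : M) ≤ q • ⊤ := by
      calc (a * bA) • (⊤ : M) = a • (bA • ⊤) := LatticeModule.mul_smul _ _ _
        _ = a • A := by rw [← hAeq]
        _ ≤ N := haA
        _ = q • ⊤ := hNq
    have hab : a * bA ≤ q := key_cancel hPGM hmult hfaith htop _ _ habq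
    rcases hq.2 bA a (by rwa [mul_comm] at hab) with hb | ha
    · refine Or.inl ?_
      rw [hAeq, hNq]
      exact mod_smul_le_smul_left hb ⊤
    · refine Or.inr ?_
      have hqc : q ≤ c := le_mColon hNq.ge
      exact ha.trans (hδL.2 q c hqc)
  tfae_finish
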